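/- arXiv:1808.07994 — 8 statements merged into one kernel-verified Lean document; each statement's English description precedes it below -/
import Mathlib

section
/- If n is odd and T is any positive multiple of the multiplicative order of 2 modulo n, then (2^T/(2^T - 1)) · Σ_{i=0}^{T-1} (2^i mod n)/2^i is independent of the choice of such T. -/
lemma pow_mod_period (n r k i : ℕ) (h : (2 : ZMod n)^r = 1) :
    2 ^ (r * k + i) % n = 2 ^ i % n := by
  have : ((2 ^ (r * k + i) : ℕ) : ZMod n) = ((2 ^ i : ℕ) : ZMod n) := by
    push_cast
    rw [pow_add, pow_mul, h, one_pow, one_mul]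
  exact (ZMod.natCast_eq_natCast_iff' _ _ _).mp this

lemma key_ind (n r : ℕ) (h : (2 : ZMod n)^r = 1) (k : ℕ) :
    (∑ i ∈ Finset.range (r * k), ((2 ^ i % n : ℕ) : ℝ) / 2 ^ i) * 2 ^ (r * k) * (2 ^ r - 1)
      = (∑ i ∈ Finset.range r, ((2 ^ i % n : ℕ) : ℝ) / 2 ^ i) * 2 ^ r * (2 ^ (r * k) - 1) := by
  induction k with
  | zero => simp
  | succ k ih =>
    rw [Nat.mul_succ, Finset.sum_range_add]
    have e : ∀ i ∈ Finset.range r, ((2 ^ (r * k + i) % n : ℕ) : ℝ) / 2 ^ (r * k + i)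
        = (((2 ^ i % n : ℕ) : ℝ) / 2 ^ i) / 2 ^ (r * k) := by
      intro i _
      rw [pow_mod_period n r k i h, pow_add]
      ring
    rw [Finset.sum_congr rfl e, ← Finset.sum_div]
    have h2 : (2 : ℝ) ^ (r * k) ≠ 0 := by positivity
    rw [pow_add]
    field_simp
    linear_combination ih

lemma key2 (n r T : ℕ) (hr : 0 < r) (h : (2 : ZMod n)^r = 1) (hT : r ∣ T) (hT0 : 0 < T) :
    (2 ^ T / (2 ^ T - 1)) * ∑ i ∈ Finset.range T, ((2 ^ i % n : ℕ) : ℝ) / 2 ^ i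
      = (2 ^ r / (2 ^ r - 1)) * ∑ i ∈ Finset.range r, ((2 ^ i % n : ℕ) : ℝ) / 2 ^ i := by
  obtain ⟨k, rfl⟩ := hT
  have H := key_ind n r h k
  have h1 : (1:ℝ) < 2 ^ (r * k) := one_lt_pow₀ one_lt_two hT0.ne'
  have h2 : (1:ℝ) < 2 ^ r := one_lt_pow₀ one_lt_two hr.ne'
  have d1 : (2:ℝ) ^ (r * k) - 1 ≠ 0 := by linarith
  have d2 : (2:ℝ) ^ r - 1 ≠ 0 := by linarith
  field_simp
  linear_combination H

theorem expectation_indep_of_period (n : ℕ) (hn : Odd n)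
    (T₁ T₂ : ℕ) (hT₁ : 0 < T₁) (hT₂ : 0 < T₂)
    (h₁ : orderOf (2 : ZMod n) ∣ T₁) (h₂ : orderOf (2 : ZMod n) ∣ T₂) :
    (2 ^ T₁ / (2 ^ T₁ - 1)) * ∑ i ∈ Finset.range T₁, ((2 ^ i % n : ℕ) : ℝ) / 2 ^ i
      = (2 ^ T₂ / (2 ^ T₂ - 1)) * ∑ i ∈ Finset.range T₂, ((2 ^ i % n : ℕ) : ℝ) / 2 ^ i := by
  set r := orderOf (2 : ZMod n) with hrdef
  have hr : 0 < r := by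
    rcases Nat.eq_zero_or_pos r with h0 | h0
    · rw [h0] at h₁
      exact absurd (zero_dvd_iff.mp h₁) hT₁.ne'
    · exact h0
  have hpow : (2 : ZMod n) ^ r = 1 := pow_orderOf_eq_one _
  rw [key2 n r T₁ hr hpow h₁ hT₁, key2 n r T₂ hr hpow h₂ hT₂]
end

section
/- For odd n ≥ 3, the expected number of tosses of the bit-efficient scheme equals the infinite series Σ_{t=0}^{∞} (2^t mod n)/2^t, and this series equals (2^T/(2^T-1)) Σ_{i=0}^{T-1} (2^i mod n)/2^i where T = ord_n(2). -/
set_option maxHeartbeats 1000000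

theorem expectation_series_eq (n : ℕ) (hn : Odd n) (hn3 : 3 ≤ n) :
    (∑' t : ℕ, ((2 ^ t % n : ℕ) : ℝ) / 2 ^ t)
      = (2 ^ (orderOf (2 : ZMod n)) / (2 ^ (orderOf (2 : ZMod n)) - 1)) *
        ∑ i ∈ Finset.range (orderOf (2 : ZMod n)), ((2 ^ i % n : ℕ) : ℝ) / 2 ^ i := by
  have hn0 : n ≠ 0 := by omega
  haveI : NeZero n := ⟨hn0⟩
  set T := orderOf (2 : ZMod n) with hTdef
  -- T positive
  have hu : IsUnit (2 : ZMod n) := by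
    have : IsUnit ((2 : ℕ) : ZMod n) := (ZMod.isUnit_iff_coprime 2 n).mpr
      (Nat.coprime_two_left.mpr hn)
    simpa using this
  obtain ⟨u, hu2⟩ := hu
  have hT : 0 < T := by
    rw [hTdef, ← hu2, orderOf_units]
    exact orderOf_pos u
  haveI : NeZero T := ⟨hT.ne'⟩
  set f : ℕ → ℝ := fun t => ((2 ^ t % n : ℕ) : ℝ) / 2 ^ t with hf
  -- summability
  have hsum : Summable f := by
    have hle : ∀ t : ℕ, f t ≤ (n : ℝ) * (1/2) ^ t := by
      intro t
      rw [hf]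
      simp only [div_pow, one_pow, mul_one_div]
      have h1 : (2 ^ t % n : ℕ) ≤ n := le_of_lt (Nat.mod_lt _ (by omega))
      gcongr
    exact Summable.of_nonneg_of_le (fun t => by rw [hf]; positivity) hle
      ((summable_geometric_of_lt_one (by norm_num) (by norm_num)).mul_left _)
  -- periodicity
  have hper : ∀ t : ℕ, 2 ^ (t + T) % n = 2 ^ t % n := by
    intro t
    have h1 : ((2 ^ (t + T) : ℕ) : ZMod n) = ((2 ^ t : ℕ) : ZMod n) := by
      push_cast
      rw [pow_add, pow_orderOf_eq_one, mul_one]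
    have := (ZMod.natCast_eq_natCast_iff' _ _ _).mp h1
    simpa using this
  have hmod : ∀ q r : ℕ, 2 ^ (q * T + r) % n = 2 ^ r % n := by
    intro q r
    induction q with
    | zero => simp
    | succ k ih =>
        have : (k + 1) * T + r = (k * T + r) + T := by ring
        rw [this, hper, ih]
  have hkey : ∀ q : ℕ, ∀ r : Fin T, f (q * T + (r : ℕ)) = ((1 / 2 ^ T : ℝ)) ^ q * f r := by
    intro q r
    rw [hf]
    simp only [hmod]
    rw [pow_add, pow_mul]
    push_cast
    field_simp
    try ring
    try tauto
    rw [mul_assoc, ← mul_pow]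
    norm_num
  -- rewrite tsum via divModEquiv
  have he : (∑' t : ℕ, f t) = ∑' p : ℕ × Fin T, f ((Nat.divModEquiv T).symm p) :=
    ((Nat.divModEquiv T).symm.tsum_eq f).symm
  have hsum2 : Summable fun p : ℕ × Fin T => f ((Nat.divModEquiv T).symm p) :=
    (Nat.divModEquiv T).symm.summable_iff.mpr hsum
  have hT1 : (1 : ℝ) < 2 ^ T := one_lt_pow₀ (by norm_num) hT.ne'
  have hr0 : (0 : ℝ) ≤ 1 / 2 ^ T := by positivity
  have hr1 : (1 / 2 ^ T : ℝ) < 1 := by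
    rw [div_lt_one (by positivity)]; exact hT1
  calc (∑' t : ℕ, f t)
      = ∑' p : ℕ × Fin T, f ((Nat.divModEquiv T).symm p) := he
    _ = ∑' q : ℕ, ∑' r : Fin T, f ((Nat.divModEquiv T).symm (q, r)) :=
        Summable.tsum_prod' hsum2 (fun q => Summable.of_finite)
    _ = ∑' q : ℕ, ∑' r : Fin T, ((1 / 2 ^ T : ℝ)) ^ q * f r := by
        congr 1; ext q; congr 1; ext r
        simp only [Nat.divModEquiv]
        exact hkey q r
    _ = ∑' q : ℕ, ((1 / 2 ^ T : ℝ)) ^ q * ∑ r : Fin T, f r := by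
        congr 1; ext q
        rw [tsum_fintype, Finset.mul_sum]
    _ = (∑' q : ℕ, ((1 / 2 ^ T : ℝ)) ^ q) * ∑ r : Fin T, f r := tsum_mul_right
    _ = (1 - 1 / 2 ^ T)⁻¹ * ∑ r : Fin T, f r := by
        rw [tsum_geometric_of_lt_one hr0 hr1]
    _ = (2 ^ T / (2 ^ T - 1)) * ∑ i ∈ Finset.range T, f i := by
        rw [Fin.sum_univ_eq_sum_range]
        congr 1
        rw [one_div, ← one_div]
        field_simp
end

section
/- For odd n ≥ 3 and any t ≥ 1, with c_t = 2^t mod n, the quantity 2·c_{t-1} - c_t is nonnegative, so Pr(t) = 2^(-t)(2c_{t-1} - c_t) defines a valid (nonnegative) probability of terminating at the t-th toss, and these probabilities sum to 1. -/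
open Filter Topology

theorem termination_probabilities (n : ℕ) (hn : Odd n) (hn3 : 3 ≤ n) :
    (∀ t : ℕ, 1 ≤ t → 2 ^ t % n ≤ 2 * (2 ^ (t - 1) % n)) ∧
    (∑' t : ℕ, (2 * ((2 ^ t % n : ℕ) : ℝ) - ((2 ^ (t + 1) % n : ℕ) : ℝ)) / 2 ^ (t + 1)) = 1 := by
  have hn0 : 0 < n := by omega
  have key : ∀ t : ℕ, 2 ^ (t + 1) % n ≤ 2 * (2 ^ t % n) := by
    intro t
    calc 2 ^ (t + 1) % n = (2 * (2 ^ t % n)) % n := by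
          simp [pow_succ, mul_comm, Nat.mul_mod]
      _ ≤ 2 * (2 ^ t % n) := Nat.mod_le _ _
  constructor
  · intro t ht
    obtain ⟨s, rfl⟩ : ∃ s, t = s + 1 := ⟨t - 1, by omega⟩
    simpa using key s
  · set f : ℕ → ℝ := fun t => ((2 ^ t % n : ℕ) : ℝ) / 2 ^ t with hf
    have hterm : ∀ t : ℕ,
        (2 * ((2 ^ t % n : ℕ) : ℝ) - ((2 ^ (t + 1) % n : ℕ) : ℝ)) / 2 ^ (t + 1)
          = f t - f (t + 1) := by
      intro t
      simp only [hf]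
      rw [pow_succ]
      field_simp
      ring
    have hterm_nonneg : ∀ t : ℕ, 0 ≤ f t - f (t + 1) := by
      intro t
      rw [← hterm t]
      apply div_nonneg _ (by positivity)
      have := key t
      have : ((2 ^ (t + 1) % n : ℕ) : ℝ) ≤ 2 * ((2 ^ t % n : ℕ) : ℝ) := by
        exact_mod_cast this
      linarith
    have hf0 : f 0 = 1 := by
      simp [hf, Nat.mod_eq_of_lt (by omega : 1 < n)]
    have hftend : Tendsto f atTop (𝓝 0) := by
      have hub : ∀ t, ‖f t‖ ≤ (n : ℝ) * (1/2) ^ t := by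
        intro t
        rw [Real.norm_eq_abs, abs_of_nonneg (by positivity)]
        rw [hf, div_le_iff₀ (by positivity)]
        calc ((2 ^ t % n : ℕ) : ℝ) ≤ n := by
              exact_mod_cast (Nat.mod_lt _ hn0).le
          _ = n * ((1/2 : ℝ) ^ t * 2 ^ t) := by
              rw [one_div, inv_pow, inv_mul_cancel₀ (by positivity)]; ring
          _ = n * (1/2) ^ t * 2 ^ t := by ring
      have : Tendsto (fun t : ℕ => (n : ℝ) * (1/2) ^ t) atTop (𝓝 0) := by
        simpa using (tendsto_pow_atTop_nhds_zero_of_lt_one (by norm_num) (by norm_num)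
          : Tendsto (fun t : ℕ => (1/2 : ℝ) ^ t) atTop (𝓝 0)).const_mul (n : ℝ)
      exact squeeze_zero_norm hub this
    have hsum : HasSum (fun t => f t - f (t + 1)) 1 := by
      rw [hasSum_iff_tendsto_nat_of_nonneg hterm_nonneg]
      have : ∀ N : ℕ, ∑ t ∈ Finset.range N, (f t - f (t + 1)) = f 0 - f N := by
        intro N; exact Finset.sum_range_sub' f N
      simp only [this, hf0]
      simpa using (tendsto_const_nhds.sub hftend :
        Tendsto (fun N : ℕ => (1 : ℝ) - f N) atTop (𝓝 (1 - 0)))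
    calc (∑' t : ℕ, (2 * ((2 ^ t % n : ℕ) : ℝ) - ((2 ^ (t + 1) % n : ℕ) : ℝ)) / 2 ^ (t + 1))
        = ∑' t : ℕ, (f t - f (t + 1)) := by exact tsum_congr hterm
      _ = 1 := hsum.tsum_eq
end

section
/- Let k ≥ 1 and n = F_{2k+1}/3 = (2^(2k+1)+1)/3. Then n is an integer, 2^(2k+1) ≡ 2 (mod n-1), and 2^(2k+1) ≡ n-1 (mod n). -/
theorem first_mersenne_peak (k : ℕ) (hk : 1 ≤ k) (n : ℕ)
    (hn : n = (2 ^ (2 * k + 1) + 1) / 3) :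
    3 ∣ 2 ^ (2 * k + 1) + 1 ∧
    2 ^ (2 * k + 1) ≡ 2 [MOD n - 1] ∧
    2 ^ (2 * k + 1) ≡ n - 1 [MOD n] := by
  have d3 : 3 ∣ 2 ^ (2 * k + 1) + 1 := by
    have h4 : (4 : ℕ) ^ k ≡ 1 ^ k [MOD 3] := Nat.ModEq.pow k (by decide)
    have he : 2 ^ (2 * k + 1) = 2 * 4 ^ k := by
      rw [pow_succ, pow_mul]; ring
    have h2 : 2 ^ (2 * k + 1) + 1 ≡ 2 * 1 ^ k + 1 [MOD 3] := by
      rw [he]; exact (h4.mul_left 2).add_right 1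
    have h3 : (2 * 1 ^ k + 1 : ℕ) ≡ 0 [MOD 3] := by simp [Nat.ModEq]
    exact (Nat.modEq_zero_iff_dvd).mp (h2.trans h3)
  have hn3 : 3 * n = 2 ^ (2 * k + 1) + 1 := by
    rw [hn, Nat.mul_div_cancel' d3]
  have hbig : 8 ≤ 2 ^ (2 * k + 1) := by
    calc (8 : ℕ) = 2 ^ 3 := by norm_num
    _ ≤ 2 ^ (2 * k + 1) := Nat.pow_le_pow_right (by norm_num) (by omega)
  refine ⟨d3, ?_, ?_⟩
  · obtain ⟨p, hp⟩ : ∃ p, 2 ^ (2 * k + 1) = p := ⟨_, rfl⟩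
    rw [hp] at hn3 hbig ⊢
    clear hn hp d3
    exact ((Nat.modEq_iff_dvd' (show 2 ≤ p by omega)).2 ⟨3, by omega⟩).symm
  · obtain ⟨p, hp⟩ : ∃ p, 2 ^ (2 * k + 1) = p := ⟨_, rfl⟩
    rw [hp] at hn3 hbig ⊢
    clear hn hp d3
    exact ((Nat.modEq_iff_dvd' (show n - 1 ≤ p by omega)).2 ⟨2, by omega⟩).symm
end

section
/- Let s, k ≥ 1 and n = F_{s(2k+1)}/F_s. Then n is an integer, 2^(s(2k+1)) ≡ 2^s (mod n-1), and 2^(s(2k+1)) ≡ n-1 (mod n). -/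
theorem mersenne_peak_congruences (s k : ℕ) (hs : 1 ≤ s) (hk : 1 ≤ k) (n : ℕ)
    (hn : n = (2 ^ (s * (2 * k + 1)) + 1) / (2 ^ s + 1)) :
    (2 ^ s + 1) ∣ (2 ^ (s * (2 * k + 1)) + 1) ∧
    2 ^ (s * (2 * k + 1)) ≡ 2 ^ s [MOD n - 1] ∧
    2 ^ (s * (2 * k + 1)) ≡ n - 1 [MOD n] := by
  have hpow : 2 ^ (s * (2 * k + 1)) = (2 ^ s) ^ (2 * k + 1) := by rw [pow_mul]
  set a := 2 ^ s with ha
  have ha2 : 2 ≤ a := by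
    calc 2 = 2 ^ 1 := by norm_num
    _ ≤ 2 ^ s := Nat.pow_le_pow_right (by norm_num) hs
  have hdvd : (a + 1) ∣ ((2 : ℕ) ^ (s * (2 * k + 1)) + 1) := by
    rw [hpow]
    have := Odd.nat_add_dvd_pow_add_pow a 1 (n := 2 * k + 1) ⟨k, by ring⟩
    simpa using this
  have hmul : n * (a + 1) = a ^ (2 * k + 1) + 1 := by
    rw [hn, ← hpow]
    exact Nat.div_mul_cancel hdvd
  have hle : a ≤ a ^ (2 * k + 1) := Nat.le_self_pow (by omega) a
  have hkey : a ^ (2 * k + 1) - a = (n - 1) * (a + 1) := by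
    have hn1 : 1 ≤ n := by
      by_contra h
      have : n = 0 := by omega
      rw [this] at hmul; simp at hmul
    have : (n - 1) * (a + 1) = n * (a + 1) - (a + 1) := by
      rw [Nat.sub_mul, one_mul]
    rw [this, hmul]
    omega
  refine ⟨hdvd, ?_, ?_⟩
  · have hle' : (2 : ℕ) ^ s ≤ 2 ^ (s * (2 * k + 1)) := by rw [hpow]; exact hle
    rw [Nat.ModEq.comm, Nat.modEq_iff_dvd' hle']
    rw [hpow]
    exact ⟨a + 1, hkey⟩
  · have hnle : n - 1 ≤ 2 ^ (s * (2 * k + 1)) := by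
      have : n ≤ n * (a + 1) := Nat.le_mul_of_pos_right n (by omega)
      rw [hpow]; omega
    rw [Nat.ModEq.comm, Nat.modEq_iff_dvd' hnle]
    refine ⟨a, ?_⟩
    have : 2 ^ (s * (2 * k + 1)) - (n - 1) = n * (a + 1) - n := by
      rw [hmul, hpow]
      have hn1 : 1 ≤ n := by
        by_contra h
        have : n = 0 := by omega
        rw [this] at hmul; simp at hmul
      omega
    rw [this, Nat.mul_add, mul_one]
    omega
end

section
/- For odd n ≥ 3, the expectation e[n] = Σ_{t=0}^{∞} (2^t mod n)/2^t satisfies ⌈log₂ n⌉ ≤ e[n] < ⌈log₂ n⌉ + 1. -/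
set_option maxHeartbeats 1000000

theorem expectation_bounds (n : ℕ) (hn : Odd n) (hn3 : 3 ≤ n) :
    (Nat.clog 2 n : ℝ) ≤ (∑' t : ℕ, ((2 ^ t % n : ℕ) : ℝ) / 2 ^ t) ∧
    (∑' t : ℕ, ((2 ^ t % n : ℕ) : ℝ) / 2 ^ t) < Nat.clog 2 n + 1 := by
  set k := Nat.clog 2 n with hk
  have hn1 : 1 < n := by omega
  have hnpos : 0 < n := by omega
  have hkpos : 0 < k := Nat.clog_pos one_lt_two (by omega)
  have hk2 : n ≤ 2 ^ k := Nat.le_pow_clog one_lt_two n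
  have hk1 : 2 ^ (k - 1) < n := Nat.pow_pred_clog_lt_self one_lt_two hn1
  have hne : n ≠ 2 ^ k := by
    intro h
    have : Even n := h ▸ (Nat.even_pow.2 ⟨even_two, hkpos.ne'⟩)
    exact (Nat.not_odd_iff_even.2 this) hn
  have hklt : n < 2 ^ k := lt_of_le_of_ne hk2 hne
  have h2k : 2 ^ k < 2 * n := by
    have h : 2 ^ k = 2 * 2 ^ (k - 1) := by
      rw [← pow_succ']
      congr 1
      omega
    omega
  set f : ℕ → ℝ := fun t => ((2 ^ t % n : ℕ) : ℝ) / 2 ^ t with hf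
  have hfnn : ∀ t, 0 ≤ f t := fun t => by positivity
  have hfle : ∀ t, f t ≤ ((n : ℝ) - 1) * (1/2)^t := by
    intro t
    have h1 : (2 ^ t % n : ℕ) ≤ n - 1 := by
      have := Nat.mod_lt (2 ^ t) hnpos
      omega
    have h1' : ((2 ^ t % n : ℕ) : ℝ) ≤ (n : ℝ) - 1 := by
      have := Nat.cast_le (α := ℝ).2 h1
      push_cast at this
      have hc : ((n - 1 : ℕ) : ℝ) = (n : ℝ) - 1 := by
        push_cast [Nat.cast_sub (by omega : 1 ≤ n)]
        ring
      calc ((2 ^ t % n : ℕ) : ℝ) ≤ ((n - 1 : ℕ) : ℝ) := Nat.cast_le.2 h1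
        _ = (n : ℝ) - 1 := hc
    have h2 : (0:ℝ) < 2 ^ t := by positivity
    rw [div_le_iff₀ h2]
    calc ((2 ^ t % n : ℕ) : ℝ) ≤ (n : ℝ) - 1 := h1'
      _ = ((n : ℝ) - 1) * (1/2)^t * 2^t := by
          rw [mul_assoc, one_div, inv_pow, inv_mul_cancel₀ (by positivity)]
          ring
  have hgsum : Summable (fun t : ℕ => ((n : ℝ) - 1) * (1/2)^t) :=
    (summable_geometric_of_lt_one (by norm_num) (by norm_num)).mul_left _
  have hsum : Summable f := Summable.of_nonneg_of_le hfnn hfle hgsum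
  have hfone : ∀ t, t < k → f t = 1 := by
    intro t ht
    have h2t : 2 ^ t < n := by
      calc 2 ^ t ≤ 2 ^ (k - 1) := Nat.pow_le_pow_right (by norm_num) (by omega)
        _ < n := hk1
    simp only [hf, Nat.mod_eq_of_lt h2t]
    push_cast
    field_simp
  have hfk : f k = ((2:ℝ)^k - n) / 2^k := by
    have hm : 2 ^ k % n = 2 ^ k - n := by
      rw [Nat.mod_eq_sub_mod hk2, Nat.mod_eq_of_lt (by omega)]
    simp only [hf, hm]
    rw [Nat.cast_sub hk2]
    push_cast
    ring
  constructor
  · -- lower bound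
    have h := Summable.sum_le_tsum (Finset.range k) (fun t _ => hfnn t) hsum
    calc (k : ℝ) = ∑ t ∈ Finset.range k, f t := by
          rw [Finset.sum_congr rfl (fun t ht => hfone t (Finset.mem_range.1 ht))]
          simp
      _ ≤ ∑' t, f t := h
  · -- upper bound
    have hsplit := (hsum.sum_add_tsum_nat_add (k + 1)).symm
    have hhead : ∑ t ∈ Finset.range (k + 1), f t = (k : ℝ) + ((2:ℝ)^k - n) / 2^k := by
      rw [Finset.sum_range_succ, hfk,
        Finset.sum_congr rfl (fun t ht => hfone t (Finset.mem_range.1 ht))]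
      simp
    have htail : (∑' i : ℕ, f (i + (k + 1))) ≤ ((n:ℝ) - 1) / 2 ^ k := by
      have h1 : (∑' i : ℕ, f (i + (k + 1))) ≤
          ∑' i : ℕ, ((n : ℝ) - 1) * (1/2)^(i + (k + 1)) := by
        refine Summable.tsum_le_tsum (fun i => hfle _) ((summable_nat_add_iff _).2 hsum)
          ((summable_nat_add_iff _).2 hgsum)
      refine h1.trans_eq ?_
      have : ∀ i : ℕ, ((n : ℝ) - 1) * (1/2)^(i + (k + 1)) =
          (((n : ℝ) - 1) * (1/2)^(k+1)) * (1/2)^i := by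
        intro i; rw [pow_add]; ring
      rw [tsum_congr this, tsum_mul_left, tsum_geometric_of_lt_one (by norm_num) (by norm_num)]
      rw [pow_succ]
      field_simp
      have h2k' : (1/2:ℝ)^k * 2^k = 1 := by rw [one_div, inv_pow, inv_mul_cancel₀ (by positivity)]
      linear_combination ((n:ℝ) - 1) * h2k'
    have hklt' : (n : ℝ) < 2 ^ k := by
      have := Nat.cast_lt (α := ℝ).2 hklt
      push_cast at this
      exact this
    calc ∑' t, f t = ∑ t ∈ Finset.range (k+1), f t + ∑' i : ℕ, f (i + (k + 1)) := hsplit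
      _ ≤ (k : ℝ) + ((2:ℝ)^k - n) / 2^k + ((n:ℝ) - 1) / 2 ^ k := by rw [hhead]; linarith
      _ = (k : ℝ) + ((2:ℝ)^k - 1) / 2^k := by ring
      _ < (k : ℝ) + 1 := by
          have h2 : (0:ℝ) < 2 ^ k := by positivity
          have : ((2:ℝ)^k - 1) / 2^k < 1 := by
            rw [div_lt_one h2]; linarith
          linarith
end

section
/- For m ≥ 1 and the Fermat number n = F_m = 2^m + 1, the expectation e[F_m] = Σ_{t=0}^{∞} (2^t mod F_m)/2^t equals 2 + m·2^m/F_m = 2 + ((n-1)/n)·log₂(n-1). -/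
private lemma fermat_aux (c x : ℝ) (hx : 2 ≤ x) :
    (c + ((x + 1) * x⁻¹ * ((x⁻¹ - 1) / ((2:ℝ)⁻¹ - 1)) - c * x⁻¹)) * (1 - (x * x)⁻¹)⁻¹
      = 2 + c * x / (x + 1) := by
  have hx0 : x ≠ 0 := by intro h; rw [h] at hx; norm_num at hx
  have hx1 : x + 1 ≠ 0 := by intro h; nlinarith
  have hlt : (x * x)⁻¹ < 1 := by
    rw [inv_lt_one_iff₀]; right; nlinarith
  have hgt : (1:ℝ) < x * x := by nlinarith
  have hxx1 : x * x - 1 ≠ 0 := sub_ne_zero.mpr hgt.ne'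
  have e1 : (x⁻¹ - 1) / ((2:ℝ)⁻¹ - 1) = 2 - 2 * x⁻¹ := by
    rw [div_eq_iff (by norm_num : ((2:ℝ)⁻¹ - 1) ≠ 0)]; ring
  have e2 : ((1:ℝ) - (x * x)⁻¹)⁻¹ = (x * x) / (x * x - 1) := by
    have h : (1:ℝ) - (x * x)⁻¹ = (x * x - 1) / (x * x) := by
      field_simp
    rw [h, inv_div]
  rw [e1, e2]
  field_simp
  rw [div_eq_iff (by intro h; nlinarith)]; ring

theorem fermat_peak_value (m : ℕ) (hm : 1 ≤ m) (n : ℕ) (hn : n = 2 ^ m + 1) :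
    (∑' t : ℕ, ((2 ^ t % n : ℕ) : ℝ) / 2 ^ t) = 2 + m * 2 ^ m / n ∧
    (2 : ℝ) + m * 2 ^ m / n = 2 + (((n : ℝ) - 1) / n) * Real.logb 2 (n - 1) := by
  subst hn
  have h1 : 1 ≤ (2:ℕ)^m := Nat.one_le_two_pow
  have hnpos : 0 < (2:ℕ)^m + 1 := by omega
  constructor
  · -- main computation
    set n : ℕ := 2^m + 1 with hn
    have h2m : (2:ℕ)^(2*m) % n = 1 := by
      have h : (2:ℕ)^(2*m) = 1 + (2^m - 1) * (2^m+1) := by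
        obtain ⟨k, hk⟩ := Nat.exists_eq_add_of_le h1
        rw [two_mul, pow_add, hk]; simp; ring
      rw [hn, h, Nat.add_mul_mod_self_right, Nat.one_mod_eq_one.mpr (by omega)]
    have hperj : ∀ j t, (2:ℕ)^(j*(2*m) + t) % n = 2^t % n := by
      intro j t
      induction j with
      | zero => simp
      | succ j ih =>
        have he : (j+1)*(2*m)+t = (j*(2*m)+t) + 2*m := by ring
        rw [he, pow_add, Nat.mul_mod, h2m, mul_one, Nat.mod_mod_of_dvd _ dvd_rfl, ih]
    have hsum : Summable (fun t : ℕ => ((2^t % n : ℕ):ℝ) / 2^t) := by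
      apply Summable.of_nonneg_of_le (fun t => by positivity) (fun t => ?_)
        (summable_geometric_two.mul_left (n:ℝ))
      have h2t : (0:ℝ) < 2^t := by positivity
      rw [div_le_iff₀ h2t]
      have hcl : ((n:ℝ)) * (1/2)^t * 2^t = n := by
        rw [mul_assoc, ← mul_pow]; norm_num
      rw [hcl]
      exact_mod_cast (Nat.mod_lt _ hnpos).le
    haveI : NeZero (2*m) := ⟨by omega⟩
    have hequiv := ((Nat.divModEquiv (2*m)).symm.tsum_eq
      (fun t : ℕ => ((2^t % n : ℕ):ℝ) / 2^t)).symm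
    simp only [Nat.divModEquiv_symm_apply] at hequiv
    have hsum2 : Summable (fun p : ℕ × Fin (2*m) =>
        ((2^(p.1 * (2*m) + (p.2:ℕ)) % n : ℕ):ℝ) / 2^(p.1 * (2*m) + (p.2:ℕ))) := by
      have := ((Nat.divModEquiv (2*m)).symm.summable_iff
        (f := fun t : ℕ => ((2^t % n : ℕ):ℝ) / 2^t)).mpr hsum
      simpa [Function.comp_def, Nat.divModEquiv] using this
    rw [hequiv, hsum2.tsum_prod]
    have hterm : ∀ (j : ℕ) (i : Fin (2*m)),
        ((2^(j * (2*m) + (i:ℕ)) % n : ℕ):ℝ) / 2^(j * (2*m) + (i:ℕ))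
        = (((2^(i:ℕ) % n : ℕ):ℝ) / 2^(i:ℕ)) * (((2:ℝ)⁻¹)^(2*m))^j := by
      intro j i
      have hp : (2:ℝ)^(j*(2*m)+(i:ℕ)) = 2^(i:ℕ) * ((2:ℝ)^(2*m))^j := by
        rw [pow_add, mul_comm j, pow_mul]; ring
      have h2 : (((2:ℝ)⁻¹)^(2*m))^j = (((2:ℝ)^(2*m))^j)⁻¹ := by
        rw [← inv_pow, ← inv_pow]
      rw [hperj, hp, h2, div_mul_eq_div_div, div_eq_mul_inv]
    simp only [hterm]
    have hinner : ∀ j : ℕ,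
        ∑' i : Fin (2*m), (((2^(i:ℕ) % n : ℕ):ℝ) / 2^(i:ℕ)) * (((2:ℝ)⁻¹)^(2*m))^j
        = (∑ t ∈ Finset.range (2*m), ((2^t % n : ℕ):ℝ) / 2^t) * (((2:ℝ)⁻¹)^(2*m))^j := by
      intro j
      rw [tsum_fintype, ← Finset.sum_mul,
        Fin.sum_univ_eq_sum_range (fun t => ((2^t % n : ℕ):ℝ) / 2^t) (2*m)]
    simp only [hinner]
    have hq1 : ((2:ℝ)⁻¹)^(2*m) < 1 := pow_lt_one₀ (by norm_num) (by norm_num) (by omega)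
    rw [tsum_mul_left, tsum_geometric_of_lt_one (by positivity) hq1]
    -- compute the finite sum
    have hsplit : ∑ t ∈ Finset.range (2*m), ((2^t % n : ℕ):ℝ) / 2^t
        = ∑ t ∈ Finset.range m, ((2^t % n : ℕ):ℝ) / 2^t
          + ∑ k ∈ Finset.range m, ((2^(m+k) % n : ℕ):ℝ) / 2^(m+k) := by
      rw [← Finset.sum_range_add_sum_Ico _ (by omega : m ≤ 2*m),
        Finset.sum_Ico_eq_sum_range, show 2*m - m = m from by omega]
    have hlow : ∑ t ∈ Finset.range m, ((2^t % n : ℕ):ℝ) / 2^t = m := by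
      rw [Finset.sum_congr rfl (fun t ht => ?_), Finset.sum_const, Finset.card_range,
        nsmul_eq_mul, mul_one]
      have hlt : (2:ℕ)^t < n := by
        have := Nat.pow_lt_pow_right (a := 2) one_lt_two (Finset.mem_range.mp ht)
        omega
      rw [Nat.mod_eq_of_lt hlt]
      push_cast
      rw [div_self (by positivity)]
    have hmod2 : ∀ k < m, (2:ℕ)^(m+k) % n = n - 2^k := by
      intro k hk
      have hA1 : 1 ≤ (2:ℕ)^k := Nat.one_le_two_pow
      have hAB : (2:ℕ)^k < 2^m := Nat.pow_lt_pow_right one_lt_two hk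
      obtain ⟨c, hc⟩ := Nat.exists_eq_add_of_le hA1
      obtain ⟨e, he⟩ := Nat.exists_eq_add_of_lt hAB
      have hkey : (2:ℕ)^(m+k) = (2^m + 1 - 2^k) + (2^k - 1) * (2^m + 1) := by
        have e1 : (2:ℕ)^m + 1 - 2^k = e + 2 := by omega
        have e2 : (2:ℕ)^k - 1 = c := by omega
        rw [pow_add, e1, e2, he, hc]; ring
      rw [hn, hkey, Nat.add_mul_mod_self_right, Nat.mod_eq_of_lt (by omega)]
    have hhigh : ∑ k ∈ Finset.range m, ((2^(m+k) % n : ℕ):ℝ) / 2^(m+k)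
        = ∑ k ∈ Finset.range m,
            ((n:ℝ) * ((2:ℝ)^m)⁻¹ * ((2:ℝ)⁻¹)^k - ((2:ℝ)^m)⁻¹) := by
      refine Finset.sum_congr rfl (fun k hk => ?_)
      rw [hmod2 k (Finset.mem_range.mp hk)]
      have hle : (2:ℕ)^k ≤ n := by
        have := Nat.pow_le_pow_right (by norm_num : 1 ≤ 2) (Finset.mem_range.mp hk).le
        omega
      rw [Nat.cast_sub hle]
      push_cast
      rw [pow_add]
      have h2 : (2:ℝ)^m ≠ 0 := by positivity
      have h2k : (2:ℝ)^k ≠ 0 := by positivity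
      field_simp
      rw [mul_sub, ← mul_assoc, mul_comm ((2:ℝ)^k), mul_assoc, ← mul_pow]; norm_num
    rw [hsplit, hlow, hhigh, Finset.sum_sub_distrib, ← Finset.mul_sum, Finset.sum_const,
      Finset.card_range, nsmul_eq_mul,
      geom_sum_eq (by norm_num : (2:ℝ)⁻¹ ≠ 1) m]
    -- final algebra
    have hxpos : (0:ℝ) < (2:ℝ)^m := by positivity
    have hx2 : (2:ℝ) ≤ (2:ℝ)^m := by
      calc (2:ℝ) = 2^1 := by norm_num
      _ ≤ 2^m := pow_le_pow_right₀ (by norm_num) hm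
    have hninv : ((2:ℝ)⁻¹)^m = ((2:ℝ)^m)⁻¹ := by rw [← inv_pow]
    have h2minv : ((2:ℝ)⁻¹)^(2*m) = ((2:ℝ)^m * (2:ℝ)^m)⁻¹ := by
      rw [two_mul, pow_add, hninv, ← mul_inv]
    have hnr : (n:ℝ) = (2:ℝ)^m + 1 := by rw [hn]; push_cast; ring
    rw [hninv, h2minv, hnr]
    exact fermat_aux m ((2:ℝ)^m) hx2
  · -- second conjunct
    have hx : ((2^m+1 : ℕ):ℝ) - 1 = 2^m := by push_cast; ring
    rw [hx]
    have hlog : Real.logb 2 ((2:ℝ)^m) = m := by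
      rw [Real.logb, Real.log_pow, mul_div_assoc,
        div_self (ne_of_gt (Real.log_pos one_lt_two)), mul_one]
    rw [hlog]
    have hne : ((2^m+1 : ℕ):ℝ) ≠ 0 := by positivity
    field_simp
end

section
/- For s, k ≥ 1 with a = F_s and b = F_{s(2k+1)}/F_s (so ab = F_{s(2k+1)}), the expectations satisfy e[a] + e[b] - e[ab] = 2/F_s, where e[F_m] = 2 + m·2^m/F_m and e[F_{s(2k+1)}/F_s] = 2sk + (s+2)/F_s - s(2k+1)/F_{s(2k+1)}. -/
theorem subadditivity_witness (s k : ℕ) (hs : 1 ≤ s) (hk : 1 ≤ k) :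
    ((2 : ℚ) + s * 2 ^ s / (2 ^ s + 1))
      + (2 * s * k + ((s : ℚ) + 2) / (2 ^ s + 1)
          - (s : ℚ) * (2 * k + 1) / (2 ^ (s * (2 * k + 1)) + 1))
      - ((2 : ℚ) + (s * (2 * k + 1) : ℚ) * 2 ^ (s * (2 * k + 1)) / (2 ^ (s * (2 * k + 1)) + 1))
      = 2 / (2 ^ s + 1) := by
  have hA : ((2:ℚ) ^ s + 1) ≠ 0 := by positivity
  have hB : ((2:ℚ) ^ (s * (2 * k + 1)) + 1) ≠ 0 := by positivity
  field_simp
  push_cast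
  ring
end
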